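/- Let a < b be positive integers and let G be a graph with n vertices and minimum degree at least a+b. If G has a spanning (b−a)-regular subgraph, then γ_{a,b}(G) ≤ ((a+b)/(a+b+1))·n. -/

import Mathlib

open SimpleGraph Finset


-- Caro-Wei style lemma
lemma caroWei {V : Type*} [Fintype V] [DecidableEq V] (K : SimpleGraph V)
    [DecidableRel K.Adj] (s : Finset V) :
    ∃ I : Finset V, I ⊆ s ∧ (∀ x ∈ I, ∀ y ∈ I, ¬ K.Adj x y) ∧
      ∑ v ∈ s, (1:ℝ)/(((K.neighborFinset v ∩ s).card : ℝ) + 1) ≤ I.card := by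
  induction s using Finset.strongInduction with
  | _ s ih =>
  rcases s.eq_empty_or_nonempty with rfl | hne
  · exact ⟨∅, by simp, by simp, by simp⟩
  · obtain ⟨v, hvs, hvmin⟩ := s.exists_min_image (fun u => ((K.neighborFinset u ∩ s).card)) hne
    set A : Finset V := insert v (K.neighborFinset v) with hA
    have hss : s \ A ⊂ s := by
      refine (Finset.ssubset_iff_of_subset Finset.sdiff_subset).2 ⟨v, hvs, ?_⟩
      simp [hA]
    obtain ⟨I, hIs, hind, hsum⟩ := ih _ hss
    have hvI : v ∉ I := fun h => by simpa [hA] using (hIs h)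
    refine ⟨insert v I, ?_, ?_, ?_⟩
    · exact Finset.insert_subset hvs (hIs.trans Finset.sdiff_subset)
    · intro x hx y hy hadj
      rcases Finset.mem_insert.1 hx with rfl | hx'
      · rcases Finset.mem_insert.1 hy with rfl | hy'
        · exact K.loopless.irrefl _ hadj
        · have : y ∈ A := by simp [hA, SimpleGraph.mem_neighborFinset, hadj]
          exact absurd this (by simpa using (Finset.mem_sdiff.1 (hIs hy')).2)
      · rcases Finset.mem_insert.1 hy with rfl | hy'
        · have : x ∈ A := by simp [hA, SimpleGraph.mem_neighborFinset, hadj.symm]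
          exact absurd this (by simpa using (Finset.mem_sdiff.1 (hIs hx')).2)
        · exact hind x hx' y hy' hadj
    · have hcard : (insert v I).card = I.card + 1 := Finset.card_insert_of_notMem hvI
      have hsplit : ∑ u ∈ s ∩ A, (1:ℝ)/(((K.neighborFinset u ∩ s).card : ℝ) + 1)
          + ∑ u ∈ s \ A, (1:ℝ)/(((K.neighborFinset u ∩ s).card : ℝ) + 1)
          = ∑ u ∈ s, (1:ℝ)/(((K.neighborFinset u ∩ s).card : ℝ) + 1) :=
        Finset.sum_inter_add_sum_sdiff s A _
      have hb1 : ∑ u ∈ s ∩ A, (1:ℝ)/(((K.neighborFinset u ∩ s).card : ℝ) + 1) ≤ 1 := by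
        have hterm : ∀ u ∈ s ∩ A, (1:ℝ)/(((K.neighborFinset u ∩ s).card : ℝ) + 1)
            ≤ 1/(((K.neighborFinset v ∩ s).card : ℝ) + 1) := by
          intro u hu
          have hmin := hvmin u (Finset.mem_inter.1 hu).1
          apply one_div_le_one_div_of_le
          · positivity
          · exact_mod_cast Nat.add_le_add_right hmin 1
        have hc : (s ∩ A).card ≤ (K.neighborFinset v ∩ s).card + 1 := by
          have : s ∩ A ⊆ insert v (K.neighborFinset v ∩ s) := by
            intro u hu
            obtain ⟨hus, huA⟩ := Finset.mem_inter.1 hu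
            rcases Finset.mem_insert.1 huA with rfl | hunb
            · exact Finset.mem_insert_self _ _
            · exact Finset.mem_insert_of_mem (Finset.mem_inter.2 ⟨hunb, hus⟩)
          calc (s ∩ A).card ≤ (insert v (K.neighborFinset v ∩ s)).card := Finset.card_le_card this
            _ ≤ (K.neighborFinset v ∩ s).card + 1 := Finset.card_insert_le _ _
        calc ∑ u ∈ s ∩ A, (1:ℝ)/(((K.neighborFinset u ∩ s).card : ℝ) + 1)
            ≤ (s ∩ A).card • (1/(((K.neighborFinset v ∩ s).card : ℝ) + 1)) :=
              Finset.sum_le_card_nsmul _ _ _ hterm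
          _ = ((s ∩ A).card : ℝ) * (1/(((K.neighborFinset v ∩ s).card : ℝ) + 1)) := by
              simp [nsmul_eq_mul]
          _ ≤ (((K.neighborFinset v ∩ s).card : ℝ) + 1) * (1/(((K.neighborFinset v ∩ s).card : ℝ) + 1)) := by
              apply mul_le_mul_of_nonneg_right
              · exact_mod_cast hc
              · positivity
          _ = 1 := by
              field_simp
      have hb2 : ∑ u ∈ s \ A, (1:ℝ)/(((K.neighborFinset u ∩ s).card : ℝ) + 1) ≤ I.card := by
        refine le_trans (Finset.sum_le_sum ?_) hsum
        intro u hu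
        apply one_div_le_one_div_of_le
        · positivity
        · have : K.neighborFinset u ∩ (s \ A) ⊆ K.neighborFinset u ∩ s :=
            Finset.inter_subset_inter_left Finset.sdiff_subset
          exact_mod_cast Nat.add_le_add_right (Finset.card_le_card this) 1
      rw [hcard]
      push_cast
      linarith [hsplit, hb1, hb2]


def IsAbDom {V : Type*} [Fintype V] [DecidableEq V] (G : SimpleGraph V)
    [DecidableRel G.Adj] (a b : ℕ) (S : Finset V) : Prop :=
  (∀ v ∈ S, a ≤ (G.neighborFinset v ∩ S).card) ∧
  (∀ v ∉ S, b ≤ (G.neighborFinset v ∩ S).card)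

theorem stmt8 {V : Type*} [Fintype V] [DecidableEq V] (G : SimpleGraph V) [DecidableRel G.Adj] (a b : ℕ) (ha : 0 < a) (hab : a < b)
    (hd : a + b ≤ G.minDegree)
    (hreg : ∃ H : SimpleGraph V, H ≤ G ∧ ∀ v, (H.neighborSet v).ncard = b - a) :
    ∃ S : Finset V, IsAbDom G a b S ∧
      (S.card : ℝ) ≤ ((a + b : ℕ) : ℝ) / ((a + b : ℕ) + 1) * Fintype.card V := by
  classical
  obtain ⟨H, hHG, hHreg⟩ := hreg
  have hHfin : ∀ v : V, (H.neighborSet v).Finite := fun v => Set.toFinite _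
  set NH : V → Finset V := fun v => (hHfin v).toFinset with hNHdef
  have hNHmem : ∀ v x, x ∈ NH v ↔ H.Adj v x := by
    intro v x
    simp [hNHdef, Set.Finite.mem_toFinset, SimpleGraph.mem_neighborSet]
  have hNHcard : ∀ v, (NH v).card = b - a := by
    intro v
    have h1 := hHreg v
    rwa [Set.ncard_eq_toFinset_card _ (hHfin v)] at h1
  have hNHsub : ∀ v, NH v ⊆ G.neighborFinset v := by
    intro v x hx
    rw [SimpleGraph.mem_neighborFinset]
    exact hHG ((hNHmem v x).1 hx)
  have hdeg : ∀ v, a + b ≤ (G.neighborFinset v).card := by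
    intro v
    exact le_trans hd (G.minDegree_le_degree v)
  set N' : V → Finset V := fun v => G.neighborFinset v \ NH v with hN'def
  have hN'card : ∀ v, 2*a ≤ (N' v).card := by
    intro v
    have h1 : (N' v).card = (G.neighborFinset v).card - (b - a) := by
      rw [hN'def]
      simp only
      rw [Finset.card_sdiff_of_subset (hNHsub v), hNHcard]
    have := hdeg v
    omega
  have hQex : ∀ v, ∃ t, t ⊆ N' v ∧ t.card = 2*a := by
    intro v
    obtain ⟨t, ht1, ht2⟩ := Finset.exists_subset_card_eq (hN'card v)
    exact ⟨t, ht1, ht2⟩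
  choose Q hQsub hQcard using hQex
  have eqv : ∀ v, {x // x ∈ Q v} ≃ Fin (2*a) := fun v => (Q v).equivFinOfCardEq (hQcard v)
  set pcl : ∀ v x, x ∈ Q v → ℕ := fun v x hx => ((eqv v ⟨x, hx⟩ : Fin (2*a)) : ℕ) % a with hpcldef
  have hpcllt : ∀ v x (hx : x ∈ Q v), pcl v x hx < a := by
    intro v x hx
    rw [hpcldef]
    exact Nat.mod_lt _ ha
  set ptr : V → V → V := fun v x =>
    if hx : x ∈ Q v then
      (((eqv v).symm ⟨(if ((eqv v ⟨x,hx⟩ : Fin (2*a)) : ℕ) < a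
          then ((eqv v ⟨x,hx⟩ : Fin (2*a)) : ℕ) + a
          else ((eqv v ⟨x,hx⟩ : Fin (2*a)) : ℕ) - a),
        by have h2 := (eqv v ⟨x,hx⟩).isLt; split <;> omega⟩ : {y // y ∈ Q v}) : V)
    else x with hptrdef
  have harith : ∀ i j : ℕ, i < 2*a → j < 2*a → i ≠ j → i % a = j % a →
      j = (if i < a then i + a else i - a) := by
    intro i j h1 h2 hne hmod
    have mi : i % a = if i < a then i else i - a := by
      split
      · exact Nat.mod_eq_of_lt ‹_›
      · rw [Nat.mod_eq_sub_mod (by omega)]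
        exact Nat.mod_eq_of_lt (by omega)
    have mj : j % a = if j < a then j else j - a := by
      split
      · exact Nat.mod_eq_of_lt ‹_›
      · rw [Nat.mod_eq_sub_mod (by omega)]
        exact Nat.mod_eq_of_lt (by omega)
    rw [mi, mj] at hmod
    split at hmod <;> split at hmod <;> split <;> omega
  -- uniqueness of partner
  have hf4 : ∀ v x y (hx : x ∈ Q v) (hy : y ∈ Q v), x ≠ y → pcl v x hx = pcl v y hy →
      y = ptr v x := by
    intro v x y hx hy hne hcl
    have hij : ((eqv v ⟨x,hx⟩ : Fin (2*a)) : ℕ) ≠ ((eqv v ⟨y,hy⟩ : Fin (2*a)) : ℕ) := by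
      intro h
      apply hne
      have h2 : (eqv v ⟨x,hx⟩) = (eqv v ⟨y,hy⟩) := Fin.ext h
      have h3 := (eqv v).injective h2
      exact Subtype.ext_iff.1 h3
    rw [hpcldef] at hcl
    simp only at hcl
    have hlt1 := (eqv v ⟨x,hx⟩).isLt
    have hlt2 := (eqv v ⟨y,hy⟩).isLt
    have hj : ((eqv v ⟨y,hy⟩ : Fin (2*a)) : ℕ) =
        (if ((eqv v ⟨x,hx⟩ : Fin (2*a)) : ℕ) < a
          then ((eqv v ⟨x,hx⟩ : Fin (2*a)) : ℕ) + a
          else ((eqv v ⟨x,hx⟩ : Fin (2*a)) : ℕ) - a) :=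
      harith _ _ hlt1 hlt2 hij hcl
    rw [hptrdef]
    simp only [dif_pos hx]
    have h5 : (⟨(if ((eqv v ⟨x,hx⟩ : Fin (2*a)) : ℕ) < a
          then ((eqv v ⟨x,hx⟩ : Fin (2*a)) : ℕ) + a
          else ((eqv v ⟨x,hx⟩ : Fin (2*a)) : ℕ) - a), by
            have h2 := (eqv v ⟨x,hx⟩).isLt; split <;> omega⟩ : Fin (2*a)) = eqv v ⟨y,hy⟩ :=
      Fin.ext (by simp only; exact hj.symm)
    rw [h5, Equiv.symm_apply_apply]
  set Gs : SimpleGraph V := SimpleGraph.fromRel (fun x y =>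
    H.Adj x y ∨ ∃ (u : V) (hx : x ∈ Q u) (hy : y ∈ Q u), pcl u x hx = pcl u y hy) with hGsdef
  letI : DecidableRel Gs.Adj := Classical.decRel _
  have hGsH : ∀ {x y}, H.Adj x y → Gs.Adj x y := by
    intro x y h
    rw [hGsdef, SimpleGraph.fromRel_adj]
    exact ⟨h.ne, Or.inl (Or.inl h)⟩
  have hGsPair : ∀ u x y (hx : x ∈ Q u) (hy : y ∈ Q u), x ≠ y → pcl u x hx = pcl u y hy →
      Gs.Adj x y := by
    intro u x y hx hy hne hcl
    rw [hGsdef, SimpleGraph.fromRel_adj]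
    exact ⟨hne, Or.inl (Or.inr ⟨u, hx, hy, hcl⟩)⟩
  -- degree bound for Gs
  have hdegGs : ∀ x, (Gs.neighborFinset x).card ≤ (b - a) + (univ.filter (fun u => x ∈ Q u)).card := by
    intro x
    have hsub2 : Gs.neighborFinset x ⊆ NH x ∪ (univ.filter (fun u => x ∈ Q u)).image (fun u => ptr u x) := by
      intro y hy
      rw [SimpleGraph.mem_neighborFinset, hGsdef, SimpleGraph.fromRel_adj] at hy
      obtain ⟨hne, hrel⟩ := hy
      rw [Finset.mem_union]
      rcases hrel with (hH | ⟨u, hxq, hyq, hclq⟩) | (hH | ⟨u, hyq, hxq, hclq⟩)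
      · exact Or.inl ((hNHmem x y).2 hH)
      · refine Or.inr (Finset.mem_image.2 ⟨u, Finset.mem_filter.2 ⟨Finset.mem_univ u, hxq⟩, ?_⟩)
        exact (hf4 u x y hxq hyq hne hclq).symm
      · exact Or.inl ((hNHmem x y).2 hH.symm)
      · refine Or.inr (Finset.mem_image.2 ⟨u, Finset.mem_filter.2 ⟨Finset.mem_univ u, hxq⟩, ?_⟩)
        exact (hf4 u x y hxq hyq hne hclq.symm).symm
    calc (Gs.neighborFinset x).card
        ≤ (NH x ∪ (univ.filter (fun u => x ∈ Q u)).image (fun u => ptr u x)).card :=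
          Finset.card_le_card hsub2
      _ ≤ (NH x).card + ((univ.filter (fun u => x ∈ Q u)).image (fun u => ptr u x)).card :=
          Finset.card_union_le _ _
      _ ≤ (b - a) + (univ.filter (fun u => x ∈ Q u)).card := by
          rw [hNHcard]
          exact Nat.add_le_add_left (Finset.card_image_le) _
  -- total count of pair memberships
  have hsumT : ∑ x : V, (univ.filter (fun u => x ∈ Q u)).card = Fintype.card V * (2*a) := by
    have h1 : ∀ x : V, (univ.filter (fun u => x ∈ Q u)).card
        = ∑ u : V, (if x ∈ Q u then 1 else 0) := by
      intro x
      rw [Finset.card_filter]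
    rw [Finset.sum_congr rfl (fun x _ => h1 x), Finset.sum_comm]
    have h2 : ∀ u : V, ∑ x : V, (if x ∈ Q u then 1 else 0) = 2*a := by
      intro u
      rw [← Finset.card_filter]
      have : univ.filter (fun x => x ∈ Q u) = Q u := by
        ext x
        simp
      rw [this, hQcard]
    rw [Finset.sum_congr rfl (fun u _ => h2 u), Finset.sum_const, Finset.card_univ, smul_eq_mul]
  have hsumdeg : ∑ x : V, ((Gs.neighborFinset x).card + 1) ≤ Fintype.card V * (a + b + 1) := by
    calc ∑ x : V, ((Gs.neighborFinset x).card + 1)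
        ≤ ∑ x : V, (((b - a) + (univ.filter (fun u => x ∈ Q u)).card) + 1) := by
          apply Finset.sum_le_sum
          intro x _
          exact Nat.add_le_add_right (hdegGs x) 1
      _ = Fintype.card V * ((b-a) + 1) + ∑ x : V, (univ.filter (fun u => x ∈ Q u)).card := by
          rw [Finset.sum_add_distrib, Finset.sum_add_distrib, Finset.sum_const, Finset.sum_const,
            Finset.card_univ, smul_eq_mul, smul_eq_mul]
          ring
      _ = Fintype.card V * ((b-a) + 1) + Fintype.card V * (2*a) := by rw [hsumT]
      _ = Fintype.card V * (((b-a) + 1) + 2*a) := by ring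
      _ = Fintype.card V * (a + b + 1) := by
          congr 1
          omega
  -- independent set via Caro-Wei
  obtain ⟨I, hIuniv, hInd, hIcw⟩ := caroWei Gs univ
  simp only [Finset.inter_univ] at hIcw
  -- Cauchy-Schwarz
  have hx : ∀ v : V, (0:ℝ) < ((Gs.neighborFinset v).card : ℝ) + 1 := fun v =>
    add_pos_of_nonneg_of_pos (Nat.cast_nonneg _) one_pos
  have hCS : ((Fintype.card V : ℝ))^2 ≤
      (∑ v : V, (((Gs.neighborFinset v).card : ℝ) + 1)) *
      (∑ v : V, (1:ℝ)/(((Gs.neighborFinset v).card : ℝ) + 1)) := by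
    have h := Finset.sum_mul_sq_le_sq_mul_sq univ
      (fun v => Real.sqrt (((Gs.neighborFinset v).card : ℝ) + 1))
      (fun v => 1 / Real.sqrt (((Gs.neighborFinset v).card : ℝ) + 1))
    have h1 : ∀ v : V, Real.sqrt (((Gs.neighborFinset v).card : ℝ) + 1) *
        (1/Real.sqrt (((Gs.neighborFinset v).card : ℝ) + 1)) = 1 := by
      intro v
      have hnz : Real.sqrt (((Gs.neighborFinset v).card : ℝ) + 1) ≠ 0 :=
        Real.sqrt_ne_zero'.2 (hx v)
      field_simp
    have h2 : ∀ v : V, Real.sqrt (((Gs.neighborFinset v).card : ℝ) + 1)^2 =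
        ((Gs.neighborFinset v).card : ℝ) + 1 := by
      intro v
      exact Real.sq_sqrt (le_of_lt (hx v))
    have h3 : ∀ v : V, (1/Real.sqrt (((Gs.neighborFinset v).card : ℝ) + 1))^2 =
        1/(((Gs.neighborFinset v).card : ℝ) + 1) := by
      intro v
      rw [div_pow, one_pow, h2 v]
    calc ((Fintype.card V : ℝ))^2
        = (∑ _v : V, (1:ℝ))^2 := by rw [Finset.sum_const, Finset.card_univ, nsmul_eq_mul, mul_one]
      _ = (∑ v : V, Real.sqrt (((Gs.neighborFinset v).card : ℝ) + 1) *
            (1/Real.sqrt (((Gs.neighborFinset v).card : ℝ) + 1)))^2 := by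
          rw [Finset.sum_congr rfl (fun v _ => (h1 v).symm)]
      _ ≤ (∑ v : V, Real.sqrt (((Gs.neighborFinset v).card : ℝ) + 1)^2) *
          (∑ v : V, (1/Real.sqrt (((Gs.neighborFinset v).card : ℝ) + 1))^2) := h
      _ = (∑ v : V, (((Gs.neighborFinset v).card : ℝ) + 1)) *
          (∑ v : V, (1:ℝ)/(((Gs.neighborFinset v).card : ℝ) + 1)) := by
          rw [Finset.sum_congr rfl (fun v _ => h2 v), Finset.sum_congr rfl (fun v _ => h3 v)]
  have hsum1 : (∑ v : V, (((Gs.neighborFinset v).card : ℝ) + 1)) ≤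
      (Fintype.card V : ℝ) * ((a:ℝ) + b + 1) := by
    have := hsumdeg
    calc (∑ v : V, (((Gs.neighborFinset v).card : ℝ) + 1))
        = ((∑ x : V, ((Gs.neighborFinset x).card + 1) : ℕ) : ℝ) := by
          push_cast
          rfl
      _ ≤ ((Fintype.card V * (a + b + 1) : ℕ) : ℝ) := by
          exact_mod_cast hsumdeg
      _ = (Fintype.card V : ℝ) * ((a:ℝ) + b + 1) := by push_cast; ring
  have hsum2 : (∑ v : V, (1:ℝ)/(((Gs.neighborFinset v).card : ℝ) + 1)) ≤ (I.card : ℝ) := hIcw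
  have hsum2pos : (0:ℝ) ≤ ∑ v : V, (1:ℝ)/(((Gs.neighborFinset v).card : ℝ) + 1) := by
    apply Finset.sum_nonneg
    intro v _
    exact one_div_nonneg.2 (le_of_lt (hx v))
  have hnI : (Fintype.card V : ℝ) ≤ ((a:ℝ) + b + 1) * I.card := by
    have hchain : ((Fintype.card V : ℝ))^2 ≤
        ((Fintype.card V : ℝ) * ((a:ℝ) + b + 1)) * (I.card : ℝ) := by
      calc ((Fintype.card V : ℝ))^2
          ≤ (∑ v : V, (((Gs.neighborFinset v).card : ℝ) + 1)) *
            (∑ v : V, (1:ℝ)/(((Gs.neighborFinset v).card : ℝ) + 1)) := hCS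
        _ ≤ ((Fintype.card V : ℝ) * ((a:ℝ) + b + 1)) * (I.card : ℝ) := by
            apply mul_le_mul hsum1 hsum2 hsum2pos
            exact mul_nonneg (Nat.cast_nonneg _)
              (add_nonneg (add_nonneg (Nat.cast_nonneg a) (Nat.cast_nonneg b)) zero_le_one)
    rcases Nat.eq_zero_or_pos (Fintype.card V) with hc | hc
    · rw [hc]
      exact le_trans (by norm_num) (mul_nonneg
        (add_nonneg (add_nonneg (Nat.cast_nonneg a) (Nat.cast_nonneg b)) zero_le_one)
        (Nat.cast_nonneg _))
    · have hcpos : (0:ℝ) < (Fintype.card V : ℝ) := by exact_mod_cast hc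
      nlinarith [hchain]
  -- key cardinality: each Q v loses at most a vertices to I
  have hQI : ∀ v, a ≤ (Q v \ I).card := by
    intro v
    have hinter : (Q v ∩ I).card ≤ a := by
      have hmaps : ∀ x ∈ Q v ∩ I, (if hx : x ∈ Q v then pcl v x hx else 0) ∈ Finset.range a := by
        intro x hxm
        obtain ⟨hxq, _⟩ := Finset.mem_inter.1 hxm
        rw [dif_pos hxq]
        exact Finset.mem_range.2 (hpcllt v x hxq)
      have hinj : ∀ x ∈ Q v ∩ I, ∀ y ∈ Q v ∩ I,
          (if hx : x ∈ Q v then pcl v x hx else 0) = (if hy : y ∈ Q v then pcl v y hy else 0) →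
          x = y := by
        intro x hxm y hym heq
        obtain ⟨hxq, hxI⟩ := Finset.mem_inter.1 hxm
        obtain ⟨hyq, hyI⟩ := Finset.mem_inter.1 hym
        rw [dif_pos hxq, dif_pos hyq] at heq
        by_contra hne
        exact hInd x hxI y hyI (hGsPair v x y hxq hyq hne heq)
      have := Finset.card_le_card_of_injOn _ hmaps hinj
      simpa using this
    have hsplit : (Q v \ I).card + (Q v ∩ I).card = (Q v).card :=
      Finset.card_sdiff_add_card_inter _ _
    have := hQcard v
    omega
  have hQIsub : ∀ v, Q v \ I ⊆ G.neighborFinset v ∩ (univ \ I) := by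
    intro v x hxm
    obtain ⟨hxq, hxI⟩ := Finset.mem_sdiff.1 hxm
    refine Finset.mem_inter.2 ⟨?_, Finset.mem_sdiff.2 ⟨Finset.mem_univ x, hxI⟩⟩
    exact Finset.mem_sdiff.1 ((hQsub v) hxq) |>.1
  -- part 1 : every vertex has ≥ a G-neighbors outside I
  have hpart1 : ∀ v : V, a ≤ (G.neighborFinset v ∩ (univ \ I)).card := by
    intro v
    exact le_trans (hQI v) (Finset.card_le_card (hQIsub v))
  -- part 2 : every vertex of I has ≥ b G-neighbors outside I
  have hpart2 : ∀ v ∈ I, b ≤ (G.neighborFinset v ∩ (univ \ I)).card := by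
    intro v hvI
    have hNHS : NH v ⊆ G.neighborFinset v ∩ (univ \ I) := by
      intro y hy
      refine Finset.mem_inter.2 ⟨hNHsub v hy, Finset.mem_sdiff.2 ⟨Finset.mem_univ y, ?_⟩⟩
      intro hyI
      exact hInd v hvI y hyI (hGsH ((hNHmem v y).1 hy))
    have hdisj : Disjoint (NH v) (Q v \ I) := by
      rw [Finset.disjoint_left]
      intro y hy1 hy2
      have hyq := (Finset.mem_sdiff.1 hy2).1
      have := (Finset.mem_sdiff.1 ((hQsub v) hyq)).2
      exact this hy1
    have hunion : NH v ∪ (Q v \ I) ⊆ G.neighborFinset v ∩ (univ \ I) :=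
      Finset.union_subset hNHS (hQIsub v)
    have hcard : (NH v ∪ (Q v \ I)).card = (b - a) + (Q v \ I).card := by
      rw [Finset.card_union_of_disjoint hdisj, hNHcard]
    have h2 := Finset.card_le_card hunion
    have h3 := hQI v
    omega
  -- the final set
  refine ⟨univ \ I, ⟨?_, ?_⟩, ?_⟩
  · intro v _
    exact hpart1 v
  · intro v hv
    have hvI : v ∈ I := by
      by_contra hvn
      exact hv (Finset.mem_sdiff.2 ⟨Finset.mem_univ v, hvn⟩)
    exact hpart2 v hvI
  · have hScard : (univ \ I).card = Fintype.card V - I.card := by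
      rw [Finset.card_sdiff_of_subset (Finset.subset_univ I), Finset.card_univ]
    have hIle : I.card ≤ Fintype.card V := Finset.card_le_univ I
    rw [hScard]
    have hcast : ((Fintype.card V - I.card : ℕ) : ℝ) = (Fintype.card V : ℝ) - I.card := by
      push_cast [hIle]
      ring
    rw [hcast]
    have hK1 : (0:ℝ) < ((a + b : ℕ) : ℝ) + 1 := by positivity
    rw [div_mul_eq_mul_div, le_div_iff₀ hK1]
    have hnI' : (Fintype.card V : ℝ) ≤ (((a + b : ℕ) : ℝ) + 1) * I.card := by
      push_cast
      push_cast at hnI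
      linarith [hnI]
    push_cast
    push_cast at hnI'
    nlinarith [hnI', (Nat.cast_nonneg I.card : (0:ℝ) ≤ I.card), (Nat.cast_nonneg (Fintype.card V) : (0:ℝ) ≤ (Fintype.card V:ℝ))]
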